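/- Let L be a countable relational first-order language and let M be an ultrahomogeneous L-structure. If M has the fixed points on type spaces property (FPT), then M has the externally definable Ramsey property. (Theorem 5.1(1).) -/

import Mathlib

open FirstOrder FirstOrder.Language CategoryTheory

universe u v w

namespace EDRP

/-- The colouring `χ` of the copies of `A` in `M` (copies identified with embeddings
`A ↪[L] M`) is externally definable by the formulas `φ i`: there are an elementary extension
`N ⪰ M` and a parameter tuple `ē` in `N` such that `χ(f(ā)) = i` iff `N ⊨ φ i (ē, f(ā))`. -/
def ExtDefinableBy (L : FirstOrder.Language.{u, v}) (M : Type w) [L.Structure M]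
    (A : Type w) [L.Structure A]
    {k e : ℕ} (φ : Fin k → L.Formula (Fin e ⊕ A)) (χ : (A ↪[L] M) → Fin k) : Prop :=
  ∃ (N : Bundled.{w} L.Structure) (emb : M ↪ₑ[L] N) (eb : Fin e → N),
    ∀ (f : A ↪[L] M) (i : Fin k),
      χ f = i ↔ (φ i).Realize (Sum.elim eb fun a => emb (f a))

/-- `χ` is an externally definable `k`-colouring of the copies of `A` in `M`. -/
def ExtDefinable (L : FirstOrder.Language.{u, v}) (M : Type w) [L.Structure M]
    (A : Type w) [L.Structure A] {k : ℕ} (χ : (A ↪[L] M) → Fin k) : Prop :=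
  ∃ (e : ℕ) (φ : Fin k → L.Formula (Fin e ⊕ A)), ExtDefinableBy L M A φ χ

/-- The copy of `B` in `M` given by the embedding `g` is `χ`-monochromatic: `χ` is constant
on the copies of `A` lying inside the image of `g`. -/
def MonochromaticOn (L : FirstOrder.Language.{u, v}) (M : Type w) [L.Structure M]
    (A B : Type w) [L.Structure A] [L.Structure B]
    {k : ℕ} (χ : (A ↪[L] M) → Fin k) (g : B ↪[L] M) : Prop :=
  ∀ f₁ f₂ : A ↪[L] M, Set.range (f₁ : A → M) ⊆ Set.range (g : B → M) →
    Set.range (f₂ : A → M) ⊆ Set.range (g : B → M) → χ f₁ = χ f₂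

/-- `M` has the externally definable `ā`-Ramsey property, where `ā` enumerates `A`:
for every `k ≥ 1`, every `B` in the age of `M` and every externally definable `k`-colouring `χ`
of the copies of `A` in `M`, there is a `χ`-monochromatic copy of `B` in `M`. -/
def ExtDefARamsey (L : FirstOrder.Language.{u, v}) (M : Type w) [L.Structure M]
    (A : Type w) [L.Structure A] : Prop :=
  ∀ (k : ℕ), 1 ≤ k → ∀ (B : Type w) [L.Structure B], Finite B → Nonempty (B ↪[L] M) →
    ∀ χ : (A ↪[L] M) → Fin k, ExtDefinable L M A χ →
      ∃ g : B ↪[L] M, MonochromaticOn L M A B χ g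

/-- `M` has the externally definable Ramsey property. -/
def ExtDefRamsey (L : FirstOrder.Language.{u, v}) (M : Type w) [L.Structure M] : Prop :=
  ∀ (A : Type w) [L.Structure A], Finite A → Nonempty (A ↪[L] M) → ExtDefARamsey L M A

/-- `M` has FPT_n: every complete `n`-type over `M` (represented by a realization `bp` in an
elementary extension `N ⪰ M`) admits an `Aut(M)`-invariant complete `n`-type over `M`
(represented by a realization `bq` in an elementary extension `N' ⪰ M`) lying in the closure of
its `Aut(M)`-orbit, where `φ(x̄, m̄) ∈ tp(b̄/M)` means `φ` is realized by `(b̄, m̄)`. -/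
def FPTn (L : FirstOrder.Language.{u, v}) (M : Type w) [L.Structure M] (n : ℕ) : Prop :=
  ∀ (N : Bundled.{w} L.Structure) (embp : M ↪ₑ[L] N) (bp : Fin n → N),
    ∃ (N' : Bundled.{w} L.Structure) (embq : M ↪ₑ[L] N') (bq : Fin n → N'),
      (∀ (g : M ≃[L] M) (m : ℕ) (φ : L.Formula (Fin n ⊕ Fin m)) (mb : Fin m → M),
        φ.Realize (Sum.elim bq fun j => embq (mb j)) ↔
          φ.Realize (Sum.elim bq fun j => embq (g (mb j)))) ∧
      (∀ (m : ℕ) (φ : L.Formula (Fin n ⊕ Fin m)) (mb : Fin m → M),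
        φ.Realize (Sum.elim bq fun j => embq (mb j)) →
          ∃ g : M ≃[L] M, φ.Realize (Sum.elim bp fun j => embp (g (mb j))))

/-- `M` has the fixed points on type spaces property: `FPT_n` for all `n ≥ 1`. -/
def FPT (L : FirstOrder.Language.{u, v}) (M : Type w) [L.Structure M] : Prop :=
  ∀ n : ℕ, 1 ≤ n → FPTn L M n

section Aux

variable {L : FirstOrder.Language.{u, v}} {M : Type w} [L.Structure M]

/-- In an ultrahomogeneous structure over a relational language, any two embeddings of a
finite structure are conjugate by an automorphism. -/
lemma exists_auto [L.IsRelational] (hM : L.IsUltrahomogeneous M) {A : Type w} [L.Structure A]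
    [Finite A] (f₀ f : A ↪[L] M) : ∃ g : M ≃[L] M, ∀ a, g (f₀ a) = f a := by
  haveI : Finite f₀.toHom.range := by
    refine Finite.of_surjective (fun a : A => ⟨f₀ a, f₀.toHom.mem_range_self a⟩) ?_
    rintro ⟨x, hx⟩
    obtain ⟨a, ha⟩ := Hom.mem_range.1 hx
    exact ⟨a, Subtype.ext ha⟩
  obtain ⟨g, hg⟩ := hM f₀.toHom.range (Substructure.fg_iff_finite.2 ‹_›)
    (f.comp f₀.equivRange.symm.toEmbedding)
  refine ⟨g, fun a => ?_⟩
  have := DFunLike.congr_fun hg (f₀.equivRange a)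
  simpa using this.symm

/-- Build an embedding in a relational language from an injective map that respects
relations in both directions. -/
def relEmb (L : FirstOrder.Language.{u, v}) [L.IsRelational] {A B : Type*} [L.Structure A]
    [L.Structure B] (u : A → B) (hinj : Function.Injective u)
    (hrel : ∀ {n} (r : L.Relations n) (x : Fin n → A),
      Structure.RelMap r (u ∘ x) ↔ Structure.RelMap r x) : A ↪[L] B where
  toFun := u
  inj' := hinj
  map_fun' := fun {n} F _ => isEmptyElim F
  map_rel' := hrel

@[simp]
lemma relEmb_apply (L : FirstOrder.Language.{u, v}) [L.IsRelational] {A B : Type*}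
    [L.Structure A] [L.Structure B] (u : A → B) (hinj : Function.Injective u)
    (hrel : ∀ {n} (r : L.Relations n) (x : Fin n → A),
      Structure.RelMap r (u ∘ x) ↔ Structure.RelMap r x) (a : A) :
    relEmb L u hinj hrel a = u a := rfl

/-- `Formula`-level realization of a finite conjunction. -/
lemma realize_iInf' {α β : Type*} {X : Type*} [L.Structure X] (s : Finset β)
    (f : β → L.Formula α) (v : α → X) :
    Formula.Realize (BoundedFormula.iInf (fun b : s => f b) : L.Formula α) v ↔
      ∀ b ∈ s, (f b).Realize v := by
  unfold Formula.Realize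
  rw [BoundedFormula.realize_iInf]
  exact ⟨fun h b hb => h ⟨b, hb⟩, fun h b => h b b.2⟩

end Aux

/-- **Theorem 5.1(1).** If an ultrahomogeneous structure `M` in a countable relational language
has FPT, then `M` has the externally definable Ramsey property. -/
theorem fpt_implies_extDefRamsey (L : FirstOrder.Language.{u, v}) [L.IsRelational]
    [Countable L.Symbols] (M : Type w) [L.Structure M]
    (hM : L.IsUltrahomogeneous M) (hFPT : FPT L M) :
    ExtDefRamsey L M := by
  classical
  intro A iA hAfin hAemb k hk B iB hBfin hBemb χ hχdef
  haveI := hAfin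
  haveI := hBfin
  obtain ⟨h⟩ := hBemb
  by_cases hA : Nonempty A
  swap
  · haveI : IsEmpty A := not_nonempty_iff.mp hA
    refine ⟨h, fun f₁ f₂ _ _ => ?_⟩
    have : f₁ = f₂ := Embedding.ext fun a => isEmptyElim a
    rw [this]
  obtain ⟨f₀⟩ := hAemb
  obtain ⟨a₀⟩ := hA
  obtain ⟨e, φ, N, emb, eb, hχ⟩ := hχdef
  haveI := Fintype.ofFinite A
  haveI := Fintype.ofFinite B
  let m := Fintype.card A
  let mB := Fintype.card B
  let eA : A ≃ Fin m := Fintype.equivFin A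
  let eB : B ≃ Fin mB := Fintype.equivFin B
  set eb' : Fin (e + 1) → N := Fin.snoc eb (emb (f₀ a₀)) with heb'
  obtain ⟨N', embq, bq, hInv, hCl⟩ := hFPT (e + 1) (Nat.le_add_left 1 e) N emb eb'
  -- the colouring formulas, with `Fin`-indexed parameter variables
  let ζ : Fin k → L.Formula (Fin (e + 1) ⊕ Fin m) :=
    fun i => ((φ i).relabel (Sum.map Fin.castSucc id)).relabel (Sum.map id ⇑eA)
  have hζR : ∀ (i : Fin k) (X : Type w) (_S : L.Structure X) (w1 : Fin (e + 1) → X)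
      (w2 : Fin m → X),
      (ζ i).Realize (Sum.elim w1 w2) ↔
        (φ i).Realize (Sum.elim (fun j => w1 j.castSucc) fun a => w2 (eA a)) := by
    intro i X _S w1 w2
    show ((((φ i).relabel (Sum.map Fin.castSucc id)).relabel (Sum.map id ⇑eA)).Realize
      (Sum.elim w1 w2)) ↔ _
    rw [Formula.realize_relabel, Formula.realize_relabel]
    apply iff_of_eq
    congr 1
    funext x
    cases x <;> simp [Function.comp]
  -- characterization of the colouring via `ζ`
  have hχ' : ∀ (f : A ↪[L] M) (i : Fin k),
      χ f = i ↔ (ζ i).Realize (Sum.elim eb' fun j => emb (f (eA.symm j))) := by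
    intro f i
    rw [hχ f i, hζR i N inferInstance eb' fun j => emb (f (eA.symm j))]
    apply iff_of_eq
    congr 1
    funext x
    cases x with
    | inl j => simp [heb', Fin.snoc_castSucc]
    | inr a => simp
  -- existence of the colour selected by the invariant type
  have hex : ∃ i : Fin k, (ζ i).Realize (Sum.elim bq fun j => embq (f₀ (eA.symm j))) := by
    by_contra hno
    push_neg at hno
    have hconj : Formula.Realize (BoundedFormula.iInf
        (fun i : (Finset.univ : Finset (Fin k)) => (ζ i).not) : L.Formula (Fin (e + 1) ⊕ Fin m))
        (Sum.elim bq fun j => embq (f₀ (eA.symm j))) := by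
      rw [realize_iInf' (f := fun i => (ζ i).not)]
      intro i _
      rw [Formula.realize_not]
      exact hno i
    obtain ⟨g, hg⟩ := hCl m _ (fun j => f₀ (eA.symm j)) hconj
    rw [realize_iInf' (f := fun i => (ζ i).not)] at hg
    have h1 := hg (χ (g.toEmbedding.comp f₀)) (Finset.mem_univ _)
    rw [Formula.realize_not] at h1
    apply h1
    have h2 := (hχ' (g.toEmbedding.comp f₀) _).1 rfl
    have hv : (fun j => emb ((g.toEmbedding.comp f₀) (eA.symm j))) =
        fun j => emb (g (f₀ (eA.symm j))) := by
      funext j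
      simp
    rwa [hv] at h2
  obtain ⟨istar, histar⟩ := hex
  -- invariance: `ζ istar` lies in `q` at every embedding of `A`
  have hall : ∀ f : A ↪[L] M,
      (ζ istar).Realize (Sum.elim bq fun j => embq (f (eA.symm j))) := by
    intro f
    obtain ⟨g, hg⟩ := exists_auto hM f₀ f
    simpa only [hg] using (hInv g m (ζ istar) fun j => f₀ (eA.symm j)).1 histar
  haveI : Finite (A ↪[L] B) :=
    Finite.of_injective (fun f : A ↪[L] B => (f : A → B)) Embedding.coe_injective
  haveI := Fintype.ofFinite (A ↪[L] B)
  -- the conjunction saying that all copies of `A` in `B` get colour `istar`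
  have hΘq : Formula.Realize (BoundedFormula.iInf
      (fun u : (Finset.univ : Finset (A ↪[L] B)) => (ζ istar).relabel (Sum.map id fun j : Fin m => eB ((u : A ↪[L] B) (eA.symm j))))
      : L.Formula (Fin (e + 1) ⊕ Fin mB))
      (Sum.elim bq fun j => embq (h (eB.symm j))) := by
    rw [realize_iInf' (f := fun u : A ↪[L] B => (ζ istar).relabel (Sum.map id fun j : Fin m => eB (u (eA.symm j))))]
    intro u _
    rw [Formula.realize_relabel]
    have hv : ((Sum.elim bq fun j => embq (h (eB.symm j))) ∘
        Sum.map id fun j : Fin m => eB (u (eA.symm j))) =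
        Sum.elim bq fun j => embq ((h.comp u) (eA.symm j)) := by
      funext x
      cases x with
      | inl j => rfl
      | inr j => simp
    rw [hv]
    exact hall (h.comp u)
  obtain ⟨g, hg⟩ := hCl mB _ (fun j => h (eB.symm j)) hΘq
  rw [realize_iInf' (f := fun u : A ↪[L] B => (ζ istar).relabel (Sum.map id fun j : Fin m => eB (u (eA.symm j))))] at hg
  refine ⟨g.toEmbedding.comp h, ?_⟩
  have hcol : ∀ f : A ↪[L] M, Set.range (f : A → M) ⊆
      Set.range ((g.toEmbedding.comp h : B ↪[L] M) : B → M) → χ f = istar := by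
    intro f hsub
    have hub0 : ∀ a : A, ∃ b : B, g (h b) = f a := by
      intro a
      obtain ⟨b, hb⟩ := hsub (Set.mem_range_self a)
      exact ⟨b, hb⟩
    choose ub hub using hub0
    have hinj : Function.Injective ub := fun a₁ a₂ hEq =>
      f.injective (by rw [← hub, ← hub, hEq])
    have hrel : ∀ {n} (r : L.Relations n) (x : Fin n → A),
        Structure.RelMap r (ub ∘ x) ↔ Structure.RelMap r x := by
      intro n r x
      have e2 : (⇑(g.toEmbedding.comp h)) ∘ (ub ∘ x) = ⇑f ∘ x := by
        funext t
        simp [Function.comp, hub]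
      rw [← StrongHomClass.map_rel f r x, ← e2,
        StrongHomClass.map_rel (g.toEmbedding.comp h) r (ub ∘ x)]
    let u : A ↪[L] B := relEmb L ub hinj hrel
    have h2 := hg u (Finset.mem_univ u)
    rw [Formula.realize_relabel] at h2
    have hv2 : ((Sum.elim eb' fun j => emb (g (h (eB.symm j)))) ∘
        Sum.map id fun j : Fin m => eB (u (eA.symm j))) =
        Sum.elim eb' fun j => emb (f (eA.symm j)) := by
      funext x
      cases x with
      | inl j => rfl
      | inr j =>
        show emb (g (h (eB.symm (eB (ub (eA.symm j)))))) = emb (f (eA.symm j))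
        rw [Equiv.symm_apply_apply, hub]
    rw [hv2] at h2
    exact (hχ' f istar).2 h2
  exact fun f₁ f₂ h1 h2 => (hcol f₁ h1).trans (hcol f₂ h2).symm

end EDRP
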